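/- For every integer r ≥ 1, the following identity holds in the polynomial ring ℚ[x]: the sum over all unordered increasing trees T on the label set {1,…,r} of the product ∏_{v=1}^{r} (x·h_T(v) + 1) equals (x+1) · ∏_{i=1}^{r−1} (x·r + i). -/

import Mathlib

open scoped Classical

/-- An unordered increasing tree on the label set `{1, …, r}` (encoded as `Fin r`,
with vertex `i : Fin r` representing the label `i+1`), given by its parent function:
the root (vertex `0`, i.e. label `1`) is fixed, and every other vertex has a
father with a strictly smaller label. -/
def IsParent {r : ℕ} (f : Fin r → Fin r) : Prop :=
  ∀ v : Fin r, if v.val = 0 then f v = v else (f v).val < v.val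

/-- The hook of the vertex `v`: the set consisting of `v` together with all of its
descendants (`u` is a descendant of `v` if iterating the parent function starting
from `u` reaches `v`). -/
noncomputable def hookF {r : ℕ} (f : Fin r → Fin r) (v : Fin r) : Finset (Fin r) :=
  Finset.univ.filter fun u => ∃ n, f^[n] u = v

open Polynomial Finset

namespace HookAux

variable {r : ℕ}

lemma mem_hookF {f : Fin r → Fin r} {u v : Fin r} : u ∈ hookF f v ↔ ∃ n, f^[n] u = v := by
  simp [hookF]

/-- Attach a new largest leaf with father `k`. -/
def extendT (g : Fin r → Fin r) (k : Fin r) : Fin (r + 1) → Fin (r + 1) :=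
  Fin.lastCases (Fin.castSucc k) (fun u => Fin.castSucc (g u))

@[simp] lemma extendT_last (g : Fin r → Fin r) (k : Fin r) :
    extendT g k (Fin.last r) = Fin.castSucc k := by simp [extendT]

@[simp] lemma extendT_castSucc (g : Fin r → Fin r) (k : Fin r) (u : Fin r) :
    extendT g k (Fin.castSucc u) = Fin.castSucc (g u) := by simp [extendT]

lemma isParent_extendT {g : Fin r → Fin r} (hg : IsParent g) (k : Fin r) (hr : 1 ≤ r) :
    IsParent (extendT g k) := by
  intro v
  induction v using Fin.lastCases with
  | last =>
      rw [if_neg (by simp [Fin.last]; omega)]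
      simpa using k.isLt
  | cast u =>
      have hu := hg u
      by_cases h : u.val = 0
      · rw [if_pos (by simpa using h)]
        rw [if_pos h] at hu
        simp [hu]
      · rw [if_neg (by simpa using h)]
        rw [if_neg h] at hu
        simpa using hu

lemma parent_val_lt {f : Fin (r + 1) → Fin (r + 1)} (hf : IsParent f) (hr : 1 ≤ r)
    (v : Fin r) : (f (Fin.castSucc v)).val < r := by
  have hv := hf (Fin.castSucc v)
  by_cases h : v.val = 0
  · rw [if_pos (by simpa using h)] at hv
    rw [hv]
    simpa using h ▸ hr
  · rw [if_neg (by simpa using h)] at hv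
    calc (f (Fin.castSucc v)).val < (Fin.castSucc v).val := hv
      _ = v.val := by simp
      _ < r := v.isLt

lemma last_val_lt {f : Fin (r + 1) → Fin (r + 1)} (hf : IsParent f) (hr : 1 ≤ r) :
    (f (Fin.last r)).val < r := by
  have hv := hf (Fin.last r)
  rw [if_neg (by simp [Fin.last]; omega)] at hv
  simpa using hv

/-- Restrict a tree on `Fin (r+1)` to `Fin r` (dropping the largest leaf). -/
def restrictT (f : Fin (r + 1) → Fin (r + 1)) (hf : IsParent f) (hr : 1 ≤ r) :
    Fin r → Fin r := fun v => ⟨(f (Fin.castSucc v)).val, parent_val_lt hf hr v⟩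

lemma isParent_restrictT {f : Fin (r + 1) → Fin (r + 1)} (hf : IsParent f) (hr : 1 ≤ r) :
    IsParent (restrictT f hf hr) := by
  intro v
  have hv := hf (Fin.castSucc v)
  by_cases h : v.val = 0
  · rw [if_pos h]
    rw [if_pos (by simpa using h)] at hv
    apply Fin.ext
    simp [restrictT, hv]
  · rw [if_neg h]
    rw [if_neg (by simpa using h)] at hv
    simpa [restrictT] using hv

/-- Trees on `Fin (r+1)` are pairs: a tree on `Fin r` and the father of the last leaf. -/
noncomputable def treeEquiv (hr : 1 ≤ r) :
    {f : Fin (r + 1) → Fin (r + 1) // IsParent f} ≃ {g : Fin r → Fin r // IsParent g} × Fin r where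
  toFun T := (⟨restrictT T.1 T.2 hr, isParent_restrictT T.2 hr⟩,
    ⟨(T.1 (Fin.last r)).val, last_val_lt T.2 hr⟩)
  invFun Gk := ⟨extendT Gk.1.1 Gk.2, isParent_extendT Gk.1.2 Gk.2 hr⟩
  left_inv T := by
    apply Subtype.ext
    funext v
    induction v using Fin.lastCases with
    | last => apply Fin.ext; simp
    | cast u => apply Fin.ext; simp [restrictT]
  right_inv Gk := by
    obtain ⟨⟨g, hg⟩, k⟩ := Gk
    refine Prod.ext ?_ ?_
    · apply Subtype.ext
      funext v
      apply Fin.ext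
      simp [restrictT]
    · apply Fin.ext
      simp

lemma iterate_extendT (g : Fin r → Fin r) (k : Fin r) (n : ℕ) (u : Fin r) :
    (extendT g k)^[n] (Fin.castSucc u) = Fin.castSucc (g^[n] u) := by
  induction n generalizing u with
  | zero => simp
  | succ n ih => rw [Function.iterate_succ_apply, Function.iterate_succ_apply,
      extendT_castSucc, ih]

lemma castSucc_mem_hook_castSucc {g : Fin r → Fin r} {k u v : Fin r} :
    Fin.castSucc u ∈ hookF (extendT g k) (Fin.castSucc v) ↔ u ∈ hookF g v := by
  simp only [mem_hookF, iterate_extendT, Fin.castSucc_inj]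

lemma last_mem_hook_castSucc {g : Fin r → Fin r} {k v : Fin r} :
    Fin.last r ∈ hookF (extendT g k) (Fin.castSucc v) ↔ k ∈ hookF g v := by
  simp only [mem_hookF]
  constructor
  · rintro ⟨n, hn⟩
    match n, hn with
    | 0, hn => exact absurd hn.symm (Fin.castSucc_lt_last v).ne
    | n + 1, hn =>
        rw [Function.iterate_succ_apply, extendT_last, iterate_extendT] at hn
        exact ⟨n, Fin.castSucc_inj.mp hn⟩
  · rintro ⟨n, hn⟩
    exact ⟨n + 1, by rw [Function.iterate_succ_apply, extendT_last, iterate_extendT, hn]⟩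

lemma hook_last (g : Fin r → Fin r) (k : Fin r) :
    hookF (extendT g k) (Fin.last r) = {Fin.last r} := by
  ext u
  simp only [mem_hookF, mem_singleton]
  constructor
  · rintro ⟨n, hn⟩
    induction u using Fin.lastCases with
    | last => rfl
    | cast w =>
        rw [iterate_extendT] at hn
        exact absurd hn (Fin.castSucc_lt_last _).ne
  · rintro rfl; exact ⟨0, rfl⟩

lemma hook_castSucc (g : Fin r → Fin r) (k v : Fin r) :
    hookF (extendT g k) (Fin.castSucc v) =
      if k ∈ hookF g v then insert (Fin.last r) ((hookF g v).image Fin.castSucc)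
      else (hookF g v).image Fin.castSucc := by
  ext u
  induction u using Fin.lastCases with
  | last =>
      split_ifs with hk
      · simp [last_mem_hook_castSucc, hk]
      · simp only [mem_image]
        constructor
        · intro h; exact absurd (last_mem_hook_castSucc.mp h) hk
        · rintro ⟨a, _, ha⟩; exact absurd ha (Fin.castSucc_lt_last _).ne
  | cast w =>
      have himg : Fin.castSucc w ∈ (hookF g v).image Fin.castSucc ↔ w ∈ hookF g v := by
        simp [Fin.castSucc_inj]
      split_ifs with hk
      · rw [mem_insert, himg, castSucc_mem_hook_castSucc]
        simp [(Fin.castSucc_lt_last w).ne]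
      · rw [himg, castSucc_mem_hook_castSucc]

lemma card_hook_castSucc (g : Fin r → Fin r) (k v : Fin r) :
    (hookF (extendT g k) (Fin.castSucc v)).card =
      (hookF g v).card + if k ∈ hookF g v then 1 else 0 := by
  rw [hook_castSucc]
  have hinj : ((hookF g v).image Fin.castSucc).card = (hookF g v).card :=
    card_image_of_injective _ (Fin.castSucc_injective r)
  split_ifs with hk
  · rw [card_insert_of_notMem, hinj]
    simp only [mem_image]
    rintro ⟨a, _, ha⟩
    exact absurd ha (Fin.castSucc_lt_last _).ne
  · rw [hinj, Nat.add_zero]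

lemma self_mem_hookF (f : Fin r → Fin r) (v : Fin r) : v ∈ hookF f v :=
  mem_hookF.mpr ⟨0, rfl⟩


/-- Decompose a sum over `ι → Option β` according to the preimage of `none`. -/
lemma sum_option_decomp {ι β M : Type*} [Fintype ι] [Fintype β] [AddCommMonoid M]
    (F : (ι → Option β) → M) :
    ∑ j : ι → Option β, F j =
      ∑ P : Finset ι, ∑ j' : {t // t ∉ P} → β,
        F (fun t => if h : t ∈ P then none else some (j' ⟨t, h⟩)) := by
  classical
  rw [← Fintype.sum_fiberwise (fun j : ι → Option β => univ.filter fun t => j t = none) F]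
  refine Fintype.sum_congr _ _ fun P => ?_
  let e : {j : ι → Option β // univ.filter (fun t => j t = none) = P} ≃ ({t // t ∉ P} → β) :=
    { toFun := fun j => fun t => (j.1 t.1).get (by
        have ht : t.1 ∉ univ.filter (fun s => j.1 s = none) := by rw [j.2]; exact t.2
        rw [Finset.mem_filter] at ht
        push_neg at ht
        exact Option.ne_none_iff_isSome.mp (ht (Finset.mem_univ _)))
      invFun := fun j' => ⟨fun t => if h : t ∈ P then none else some (j' ⟨t, h⟩), by
        ext t
        simp only [Finset.mem_filter, Finset.mem_univ, true_and]
        split_ifs with h <;> simp [h]⟩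
      left_inv := fun j => by
        apply Subtype.ext
        funext t
        dsimp only
        by_cases h : t ∈ P
        · rw [dif_pos h]
          have : t ∈ univ.filter (fun s => j.1 s = none) := by rw [j.2]; exact h
          rw [Finset.mem_filter] at this
          exact this.2.symm
        · rw [dif_neg h, Option.some_get]
      right_inv := fun j' => by
        funext t
        simp [t.2] }
  refine Fintype.sum_equiv e _ _ fun j => ?_
  congr 1
  funext t
  try dsimp only
  by_cases h : t ∈ P
  · rw [dif_pos h]
    have : t ∈ univ.filter (fun s => j.1 s = none) := by rw [j.2]; exact h
    rw [Finset.mem_filter] at this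
    exact this.2
  · rw [dif_neg h]
    exact (Option.some_get _).symm

/-- Key scalar identity. -/
lemma scalar_sum {M ι : Type*} [CommRing M] [Fintype ι] (w : ι → M) (R c : M) (s : Finset ι) :
    (R + 1) * ∑ P ∈ s.powerset, (c + ∑ t ∈ P, w t) * R ^ (s \ P).card
      = (R + 1) ^ s.card * ((R + 1) * c + ∑ t ∈ s, w t) := by
  classical
  induction s using Finset.induction_on generalizing c with
  | empty => simp
  | @insert a s ha ih =>
      rw [Finset.sum_powerset_insert ha]
      have h1 : ∀ P ∈ s.powerset, (c + ∑ t ∈ P, w t) * R ^ ((insert a s) \ P).card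
          = R * ((c + ∑ t ∈ P, w t) * R ^ (s \ P).card) := by
        intro P hP
        rw [Finset.mem_powerset] at hP
        have : (insert a s) \ P = insert a (s \ P) := by
          rw [Finset.insert_sdiff_of_notMem]
          exact fun haP => ha (hP haP)
        rw [this, Finset.card_insert_of_notMem (by simp [ha]), pow_succ]
        ring
      have h2 : ∀ P ∈ s.powerset, (c + ∑ t ∈ insert a P, w t) * R ^ ((insert a s) \ insert a P).card
          = ((c + w a) + ∑ t ∈ P, w t) * R ^ (s \ P).card := by
        intro P hP
        rw [Finset.mem_powerset] at hP
        have hd : (insert a s) \ insert a P = s \ P := by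
          ext x
          simp only [Finset.mem_sdiff, Finset.mem_insert]
          constructor
          · rintro ⟨hx | hx, hx2⟩
            · exact absurd (Or.inl hx) hx2
            · exact ⟨hx, fun h => hx2 (Or.inr h)⟩
          · rintro ⟨hx, hx2⟩
            refine ⟨Or.inr hx, ?_⟩
            rintro (rfl | h)
            · exact ha hx
            · exact hx2 h
        have haP : a ∉ P := fun h => ha (hP h)
        rw [hd, Finset.sum_insert haP]
        ring
      rw [Finset.sum_congr rfl h1, Finset.sum_congr rfl h2, ← Finset.mul_sum, mul_add,
        Finset.sum_insert ha, Finset.card_insert_of_notMem ha]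
      have := ih c
      have := ih (c + w a)
      rw [show (R+1) * (R * ∑ P ∈ s.powerset, (c + ∑ t ∈ P, w t) * R ^ (s \ P).card)
          = R * ((R+1) * ∑ P ∈ s.powerset, (c + ∑ t ∈ P, w t) * R ^ (s \ P).card) by ring,
        ih c, ih (c + w a), pow_succ]
      ring



section Factor

variable {ι : Type} [Fintype ι]

lemma factor_eq (g : Fin r → Fin r) (k : Fin r) (w : ι → Polynomial ℚ)
    (P : Finset ι) (j' : {t // t ∉ P} → Fin r) (v : Fin r) :
    X * ((hookF (extendT g k) (Fin.castSucc v)).card : Polynomial ℚ) + 1 +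
        ∑ t ∈ univ.filter (fun t =>
          (if h : t ∈ P then Fin.last r else Fin.castSucc (j' ⟨t, h⟩)) ∈
            hookF (extendT g k) (Fin.castSucc v)), w t
      = X * ((hookF g v).card : Polynomial ℚ) + 1 +
        ∑ s ∈ univ.filter (fun s : Option {t // t ∉ P} =>
            s.elim k (fun t => j' t) ∈ hookF g v),
          s.elim (X + ∑ t ∈ P, w t) (fun t => w t.1) := by
  classical
  have hcard := card_hook_castSucc g k v
  have hmem : ∀ t : ι, ((if h : t ∈ P then Fin.last r else Fin.castSucc (j' ⟨t, h⟩)) ∈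
      hookF (extendT g k) (Fin.castSucc v)) ↔
      (if h : t ∈ P then k ∈ hookF g v else j' ⟨t, h⟩ ∈ hookF g v) := by
    intro t
    by_cases h : t ∈ P
    · rw [dif_pos h, dif_pos h, last_mem_hook_castSucc]
    · rw [dif_neg h, dif_neg h, castSucc_mem_hook_castSucc]
  have hsumL : ∑ t ∈ univ.filter (fun t =>
          (if h : t ∈ P then Fin.last r else Fin.castSucc (j' ⟨t, h⟩)) ∈
            hookF (extendT g k) (Fin.castSucc v)), w t
      = (if k ∈ hookF g v then ∑ t ∈ P, w t else 0) +
        ∑ x : {t // t ∉ P}, if j' x ∈ hookF g v then w x.1 else 0 := by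
    rw [Finset.sum_filter, ← Finset.sum_filter_add_sum_filter_not univ (· ∈ P)]
    congr 1
    · have hP : univ.filter (· ∈ P) = P := by ext t; simp
      rw [hP]
      by_cases hk : k ∈ hookF g v
      · rw [if_pos hk]
        refine Finset.sum_congr rfl fun t ht => ?_
        rw [if_pos ((hmem t).trans (by rw [dif_pos ht])|>.mpr hk)]
      · rw [if_neg hk]
        refine Finset.sum_eq_zero fun t ht => ?_
        rw [if_neg]
        rw [hmem t, dif_pos ht]
        exact hk
    · rw [Finset.sum_subtype (p := fun t => t ∉ P) (univ.filter (· ∉ P)) (by intro t; simp)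
        (fun t => if (if h : t ∈ P then Fin.last r else Fin.castSucc (j' ⟨t, h⟩)) ∈
            hookF (extendT g k) (Fin.castSucc v) then w t else 0)]
      refine Fintype.sum_congr _ _ fun x => ?_
      by_cases hx : j' x ∈ hookF g v
      · rw [if_pos hx, if_pos]
        rw [hmem x.1, dif_neg x.2]
        exact hx
      · rw [if_neg hx, if_neg]
        rw [hmem x.1, dif_neg x.2]
        exact hx
  have hsumR : ∑ s ∈ univ.filter (fun s : Option {t // t ∉ P} =>
            s.elim k (fun t => j' t) ∈ hookF g v),
          s.elim (X + ∑ t ∈ P, w t) (fun t => w t.1)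
      = (if k ∈ hookF g v then X + ∑ t ∈ P, w t else 0) +
        ∑ x : {t // t ∉ P}, if j' x ∈ hookF g v then w x.1 else 0 := by
    rw [Finset.sum_filter, Fintype.sum_option]
    simp only [Option.elim]; rfl
  rw [hsumL, hsumR, hcard]
  push_cast
  by_cases hk : k ∈ hookF g v
  · rw [if_pos hk, if_pos hk, if_pos hk]
    ring
  · rw [if_neg hk, if_neg hk, if_neg hk]
    ring

lemma prod_extend (g : Fin r → Fin r) (k : Fin r) (w : ι → Polynomial ℚ)
    (P : Finset ι) (j' : {t // t ∉ P} → Fin r) :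
    ∏ v : Fin (r + 1), (X * ((hookF (extendT g k) v).card : Polynomial ℚ) + 1 +
        ∑ t ∈ univ.filter (fun t =>
          (if h : t ∈ P then Fin.last r else Fin.castSucc (j' ⟨t, h⟩)) ∈
            hookF (extendT g k) v), w t)
      = (X + 1 + ∑ t ∈ P, w t) *
        ∏ v : Fin r, (X * ((hookF g v).card : Polynomial ℚ) + 1 +
          ∑ s ∈ univ.filter (fun s : Option {t // t ∉ P} =>
              s.elim k (fun t => j' t) ∈ hookF g v),
            s.elim (X + ∑ t ∈ P, w t) (fun t => w t.1)) := by
  classical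
  rw [Fin.prod_univ_castSucc]
  have hlastfilter : univ.filter (fun t =>
      (if h : t ∈ P then Fin.last r else Fin.castSucc (j' ⟨t, h⟩)) ∈
        hookF (extendT g k) (Fin.last r)) = P := by
    ext t
    rw [hook_last]
    simp only [mem_filter, mem_univ, true_and, mem_singleton]
    by_cases h : t ∈ P
    · simp [dif_pos h, h]
    · simp [dif_neg h, h, (Fin.castSucc_lt_last (j' ⟨t, h⟩)).ne]
  have hlast : X * ((hookF (extendT g k) (Fin.last r)).card : Polynomial ℚ) + 1 +
      ∑ t ∈ univ.filter (fun t =>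
          (if h : t ∈ P then Fin.last r else Fin.castSucc (j' ⟨t, h⟩)) ∈
            hookF (extendT g k) (Fin.last r)), w t = X + 1 + ∑ t ∈ P, w t := by
    rw [hlastfilter, hook_last, card_singleton]
    push_cast
    ring
  rw [hlast, Finset.prod_congr rfl (fun v _ => factor_eq g k w P j' v), mul_comm]

end Factor

set_option maxHeartbeats 1000000 in
theorem key (r : ℕ) (hr : 1 ≤ r) : ∀ (ι : Type) (_ : Fintype ι) (w : ι → Polynomial ℚ),
    (r : Polynomial ℚ) * ∑ T : {f : Fin r → Fin r // IsParent f}, ∑ j : ι → Fin r,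
      ∏ v : Fin r, (X * ((hookF T.1 v).card : Polynomial ℚ) + 1 +
        ∑ t ∈ univ.filter (fun t => j t ∈ hookF T.1 v), w t)
    = (r : Polynomial ℚ) ^ (Fintype.card ι) *
        ∏ i ∈ Icc 1 r, ((r : Polynomial ℚ) * X + (i : Polynomial ℚ) + ∑ t, w t) := by
  induction r, hr using Nat.le_induction with
  | base =>
      intro ι _ w
      haveI : Subsingleton {f : Fin 1 → Fin 1 // IsParent f} :=
        ⟨fun a b => Subtype.ext (Subsingleton.elim _ _)⟩
      have hid : IsParent (id : Fin 1 → Fin 1) := by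
        intro v
        rw [if_pos (by omega : v.val = 0)]
        rfl
      rw [Fintype.sum_subsingleton _ (⟨id, hid⟩ : {f : Fin 1 → Fin 1 // IsParent f})]
      haveI : Subsingleton (ι → Fin 1) := ⟨fun a b => funext fun t => Subsingleton.elim _ _⟩
      rw [Fintype.sum_subsingleton _ (fun _ : ι => (0 : Fin 1))]
      have hhook : ∀ u v : Fin 1, u ∈ hookF (id : Fin 1 → Fin 1) v :=
        fun u v => mem_hookF.mpr ⟨0, Subsingleton.elim _ _⟩
      have hcard : ∀ v : Fin 1, (hookF (id : Fin 1 → Fin 1) v).card = 1 := by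
        intro v
        have : hookF (id : Fin 1 → Fin 1) v = {0} := by
          ext u
          rw [Subsingleton.elim u 0]
          simp [hhook 0 v]
        rw [this, card_singleton]
      have hfil : ∀ v : Fin 1, univ.filter
          (fun t : ι => (0 : Fin 1) ∈ hookF (id : Fin 1 → Fin 1) v) = univ := by
        intro v
        refine Finset.filter_true_of_mem fun t _ => hhook 0 v
      rw [Fin.prod_univ_one, hcard, hfil]
      simp only [Nat.cast_one, one_mul, pow_succ, one_pow, Finset.Icc_self, prod_singleton]
      push_cast
      ring
  | succ r hr ih =>
      intro ι _ w
      classical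
      have claimG : ∀ G : {g : Fin r → Fin r // IsParent g},
          ∑ k : Fin r, ∑ j : ι → Fin (r + 1),
            ∏ v : Fin (r + 1), (X * ((hookF (extendT G.1 k) v).card : Polynomial ℚ) + 1 +
              ∑ t ∈ univ.filter (fun t => j t ∈ hookF (extendT G.1 k) v), w t)
          = ∑ P : Finset ι, (X + 1 + ∑ t ∈ P, w t) *
              ∑ J : Option {t // t ∉ P} → Fin r,
                ∏ v : Fin r, (X * ((hookF G.1 v).card : Polynomial ℚ) + 1 +
                  ∑ s ∈ univ.filter (fun s : Option {t // t ∉ P} => J s ∈ hookF G.1 v),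
                    s.elim (X + ∑ t ∈ P, w t) (fun t => w t.1)) := by
        intro G
        calc ∑ k : Fin r, ∑ j : ι → Fin (r + 1),
            ∏ v : Fin (r + 1), (X * ((hookF (extendT G.1 k) v).card : Polynomial ℚ) + 1 +
              ∑ t ∈ univ.filter (fun t => j t ∈ hookF (extendT G.1 k) v), w t)
            = ∑ k : Fin r, ∑ jh : ι → Option (Fin r),
                ∏ v : Fin (r + 1), (X * ((hookF (extendT G.1 k) v).card : Polynomial ℚ) + 1 +
                  ∑ t ∈ univ.filter (fun t =>
                    (Equiv.arrowCongr (Equiv.refl ι) finSuccEquivLast.symm) jh t ∈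
                      hookF (extendT G.1 k) v), w t) := by
              refine Finset.sum_congr rfl fun k _ => (Equiv.sum_comp _ _).symm
          _ = ∑ k : Fin r, ∑ P : Finset ι, ∑ j' : {t // t ∉ P} → Fin r,
                (X + 1 + ∑ t ∈ P, w t) *
                ∏ v : Fin r, (X * ((hookF G.1 v).card : Polynomial ℚ) + 1 +
                  ∑ s ∈ univ.filter (fun s : Option {t // t ∉ P} =>
                      s.elim k (fun t => j' t) ∈ hookF G.1 v),
                    s.elim (X + ∑ t ∈ P, w t) (fun t => w t.1)) := by
              refine Finset.sum_congr rfl fun k _ => ?_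
              rw [sum_option_decomp (fun jh : ι → Option (Fin r) =>
                ∏ v : Fin (r + 1), (X * ((hookF (extendT G.1 k) v).card : Polynomial ℚ) + 1 +
                  ∑ t ∈ univ.filter (fun t =>
                    (Equiv.arrowCongr (Equiv.refl ι) finSuccEquivLast.symm) jh t ∈
                      hookF (extendT G.1 k) v), w t))]
              refine Finset.sum_congr rfl fun P _ => Finset.sum_congr rfl fun j' _ => ?_
              have he : ∀ t : ι, (Equiv.arrowCongr (Equiv.refl ι) finSuccEquivLast.symm)
                  (fun t => if h : t ∈ P then none else some (j' ⟨t, h⟩)) t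
                  = (if h : t ∈ P then Fin.last r else Fin.castSucc (j' ⟨t, h⟩)) := by
                intro t
                by_cases h : t ∈ P <;> simp [Equiv.arrowCongr, h]
              simp only [he]
              rw [prod_extend]
          _ = ∑ P : Finset ι, ∑ k : Fin r, ∑ j' : {t // t ∉ P} → Fin r,
                (X + 1 + ∑ t ∈ P, w t) *
                ∏ v : Fin r, (X * ((hookF G.1 v).card : Polynomial ℚ) + 1 +
                  ∑ s ∈ univ.filter (fun s : Option {t // t ∉ P} =>
                      s.elim k (fun t => j' t) ∈ hookF G.1 v),
                    s.elim (X + ∑ t ∈ P, w t) (fun t => w t.1)) := Finset.sum_comm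
          _ = ∑ P : Finset ι, (X + 1 + ∑ t ∈ P, w t) *
              ∑ J : Option {t // t ∉ P} → Fin r,
                ∏ v : Fin r, (X * ((hookF G.1 v).card : Polynomial ℚ) + 1 +
                  ∑ s ∈ univ.filter (fun s : Option {t // t ∉ P} => J s ∈ hookF G.1 v),
                    s.elim (X + ∑ t ∈ P, w t) (fun t => w t.1)) := by
              refine Finset.sum_congr rfl fun P _ => ?_
              rw [Finset.mul_sum]
              rw [← Equiv.sum_comp
                (Equiv.piOptionEquivProd (β := fun _ : Option {t // t ∉ P} => Fin r)).symm
                (fun J : Option {t // t ∉ P} → Fin r =>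
                  (X + 1 + ∑ t ∈ P, w t) *
                  ∏ v : Fin r, (X * ((hookF G.1 v).card : Polynomial ℚ) + 1 +
                    ∑ s ∈ univ.filter (fun s : Option {t // t ∉ P} => J s ∈ hookF G.1 v),
                      s.elim (X + ∑ t ∈ P, w t) (fun t => w t.1))),
                Fintype.sum_prod_type]
              refine Finset.sum_congr rfl fun k _ => Finset.sum_congr rfl fun j' _ => ?_
              congr 1
              refine Finset.prod_congr rfl fun v _ => ?_
              congr 2
              refine Finset.filter_congr fun s _ => ?_
              cases s <;> rfl
      have hr0 : (r : Polynomial ℚ) ≠ 0 := by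
        have : r ≠ 0 := by omega
        exact_mod_cast Nat.cast_ne_zero.mpr this
      have hWsplit : ∀ P : Finset ι,
          (∑ t ∈ P, w t) + ∑ x : {t // t ∉ P}, w x.1 = ∑ t, w t := by
        intro P
        rw [← Finset.sum_filter_add_sum_filter_not univ (· ∈ P) w]
        congr 1
        · congr 1
          ext t
          simp
        · rw [Finset.sum_subtype (p := fun t => t ∉ P) (univ.filter (· ∉ P))
            (by intro t; simp) w]
      have hQ : ∀ P : Finset ι,
          ∑ G : {g : Fin r → Fin r // IsParent g}, ∑ J : Option {t // t ∉ P} → Fin r,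
            ∏ v : Fin r, (X * ((hookF G.1 v).card : Polynomial ℚ) + 1 +
              ∑ s ∈ univ.filter (fun s : Option {t // t ∉ P} => J s ∈ hookF G.1 v),
                s.elim (X + ∑ t ∈ P, w t) (fun t => w t.1))
          = (r : Polynomial ℚ) ^ (Fintype.card {t // t ∉ P}) *
              ∏ i ∈ Icc 1 r, ((r : Polynomial ℚ) * X + (i : Polynomial ℚ) + X + ∑ t, w t) := by
        intro P
        apply mul_left_cancel₀ hr0
        have H := ih (Option {t // t ∉ P}) inferInstance
          (fun s => s.elim (X + ∑ t ∈ P, w t) (fun t => w t.1))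
        refine Eq.trans ?_ (H.trans ?_)
        · refine congrArg _ (Finset.sum_congr rfl fun G _ => ?_)
          have hInst : ∀ (i1 i2 : Fintype (Option {t // t ∉ P} → Fin r))
              (F : (Option {t // t ∉ P} → Fin r) → Polynomial ℚ),
              @Finset.sum _ _ _ (@Finset.univ _ i1) F = @Finset.sum _ _ _ (@Finset.univ _ i2) F := by
            intro i1 i2 F
            rw [Subsingleton.elim i1 i2]
          exact hInst _ _ _
        · rw [Fintype.sum_option, Fintype.card_option, pow_succ]
          simp only [Option.elim]
          have hfac : ∀ i ∈ Icc 1 r, ((r : Polynomial ℚ) * X + (i : Polynomial ℚ) +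
              ((X + ∑ t ∈ P, w t) + ∑ x : {t // t ∉ P}, w x.1))
              = ((r : Polynomial ℚ) * X + (i : Polynomial ℚ) + X + ∑ t, w t) := by
            intro i _
            rw [← hWsplit P]
            ring
          rw [Finset.prod_congr rfl hfac]
          ring
      calc ((r + 1 : ℕ) : Polynomial ℚ) *
            ∑ T : {f : Fin (r + 1) → Fin (r + 1) // IsParent f}, ∑ j : ι → Fin (r + 1),
              ∏ v : Fin (r + 1), (X * ((hookF T.1 v).card : Polynomial ℚ) + 1 +
                ∑ t ∈ univ.filter (fun t => j t ∈ hookF T.1 v), w t)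
          = ((r + 1 : ℕ) : Polynomial ℚ) *
            ∑ p : {g : Fin r → Fin r // IsParent g} × Fin r, ∑ j : ι → Fin (r + 1),
              ∏ v : Fin (r + 1),
                (X * ((hookF ((treeEquiv hr).symm p).1 v).card : Polynomial ℚ) + 1 +
                ∑ t ∈ univ.filter (fun t => j t ∈ hookF ((treeEquiv hr).symm p).1 v), w t) := by
            rw [Equiv.sum_comp ((treeEquiv hr).symm)
              (fun T : {f : Fin (r + 1) → Fin (r + 1) // IsParent f} =>
                ∑ j : ι → Fin (r + 1),
                ∏ v : Fin (r + 1), (X * ((hookF T.1 v).card : Polynomial ℚ) + 1 +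
                  ∑ t ∈ univ.filter (fun t => j t ∈ hookF T.1 v), w t))]
        _ = ((r + 1 : ℕ) : Polynomial ℚ) *
            ∑ G : {g : Fin r → Fin r // IsParent g}, ∑ k : Fin r, ∑ j : ι → Fin (r + 1),
              ∏ v : Fin (r + 1),
                (X * ((hookF (extendT G.1 k) v).card : Polynomial ℚ) + 1 +
                ∑ t ∈ univ.filter (fun t => j t ∈ hookF (extendT G.1 k) v), w t) := by
            rw [Fintype.sum_prod_type]
            rfl
        _ = ((r + 1 : ℕ) : Polynomial ℚ) *
            ∑ P : Finset ι, ∑ G : {g : Fin r → Fin r // IsParent g},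
              (X + 1 + ∑ t ∈ P, w t) *
              ∑ J : Option {t // t ∉ P} → Fin r,
                ∏ v : Fin r, (X * ((hookF G.1 v).card : Polynomial ℚ) + 1 +
                  ∑ s ∈ univ.filter (fun s : Option {t // t ∉ P} => J s ∈ hookF G.1 v),
                    s.elim (X + ∑ t ∈ P, w t) (fun t => w t.1)) := by
            rw [Finset.sum_congr rfl fun G _ => claimG G, Finset.sum_comm]
        _ = ((r + 1 : ℕ) : Polynomial ℚ) *
            ∑ P : Finset ι, (X + 1 + ∑ t ∈ P, w t) *
              ((r : Polynomial ℚ) ^ (Fintype.card {t // t ∉ P}) *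
              ∏ i ∈ Icc 1 r, ((r : Polynomial ℚ) * X + (i : Polynomial ℚ) + X + ∑ t, w t)) := by
            congr 1
            refine Finset.sum_congr rfl fun P _ => ?_
            rw [← Finset.mul_sum, hQ P]
        _ = ((r : Polynomial ℚ) + 1) *
            (∑ P ∈ (univ : Finset ι).powerset,
              ((X + 1) + ∑ t ∈ P, w t) * (r : Polynomial ℚ) ^ ((univ \ P).card)) *
              ∏ i ∈ Icc 1 r, ((r : Polynomial ℚ) * X + (i : Polynomial ℚ) + X + ∑ t, w t) := by
            rw [Finset.powerset_univ]
            push_cast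
            rw [Finset.sum_congr rfl (fun P _ => by
              rw [show Fintype.card {t // t ∉ P} = (univ \ P).card by
                rw [Fintype.card_subtype, Finset.sdiff_eq_filter]])]
            rw [Finset.mul_sum]
            conv_rhs => rw [mul_assoc, Finset.sum_mul, Finset.mul_sum]
            exact Finset.sum_congr rfl fun P _ => by ring
        _ = ((r : Polynomial ℚ) + 1) ^ (Fintype.card ι) *
              (((r : Polynomial ℚ) + 1) * (X + 1) + ∑ t, w t) *
              ∏ i ∈ Icc 1 r, ((r : Polynomial ℚ) * X + (i : Polynomial ℚ) + X + ∑ t, w t) := by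
            rw [scalar_sum w ((r : Polynomial ℚ)) (X + 1) univ, Finset.card_univ, mul_assoc,
              ← mul_assoc _ _ (∏ i ∈ Icc 1 r, ((r : Polynomial ℚ) * X + (i : Polynomial ℚ) + X + ∑ t, w t))]
        _ = ((r + 1 : ℕ) : Polynomial ℚ) ^ (Fintype.card ι) *
            ∏ i ∈ Icc 1 (r + 1), (((r + 1 : ℕ) : Polynomial ℚ) * X + (i : Polynomial ℚ) + ∑ t, w t) := by
            rw [Finset.prod_Icc_succ_top (by omega : 1 ≤ r + 1)]
            have hfac : ∏ i ∈ Icc 1 r, ((r : Polynomial ℚ) * X + (i : Polynomial ℚ) + X + ∑ t, w t)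
                = ∏ i ∈ Icc 1 r, (((r + 1 : ℕ) : Polynomial ℚ) * X + (i : Polynomial ℚ) + ∑ t, w t) :=
              Finset.prod_congr rfl fun i _ => by push_cast; ring
            rw [hfac]
            push_cast
            ring

end HookAux

/-- For `r ≥ 1`, the sum over all unordered increasing trees `T` on `{1, …, r}` of
`∏_{v=1}^{r} (x · h_T(v) + 1)` equals `(x+1) · ∏_{i=1}^{r−1} (x·r + i)`, in `ℚ[x]`. -/
theorem stmt1 (r : ℕ) (hr : 1 ≤ r) :
    ∑ T : {f : Fin r → Fin r // IsParent f},
        ∏ v : Fin r, (Polynomial.X * ((hookF T.val v).card : Polynomial ℚ) + 1)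
      = (Polynomial.X + 1) *
          ∏ i ∈ Finset.Icc 1 (r - 1), ((r : Polynomial ℚ) * Polynomial.X + (i : Polynomial ℚ)) := by
  classical
  have hkey := HookAux.key r hr Empty inferInstance (fun t => (0 : Polynomial ℚ))
  have hempty : ∀ (T : {f : Fin r → Fin r // IsParent f}),
      ∑ j : Empty → Fin r, ∏ v : Fin r, (X * ((hookF T.1 v).card : Polynomial ℚ) + 1 +
        ∑ t ∈ univ.filter (fun t => j t ∈ hookF T.1 v), (0 : Polynomial ℚ))
      = ∏ v : Fin r, (X * ((hookF T.1 v).card : Polynomial ℚ) + 1) := by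
    intro T
    haveI : Subsingleton (Empty → Fin r) := ⟨fun a b => funext fun t => t.elim⟩
    haveI : Nonempty (Empty → Fin r) := ⟨fun t => t.elim⟩
    rw [Fintype.sum_subsingleton _ (Classical.arbitrary (Empty → Fin r))]
    exact Finset.prod_congr rfl fun v _ => by simp
  erw [Fintype.sum_congr _ _ hempty] at hkey
  simp only [Fintype.card_empty, pow_zero, one_mul] at hkey
  have hsum0 : (∑ t : Empty, (0 : Polynomial ℚ)) = 0 := by simp
  rw [hsum0] at hkey
  simp only [add_zero] at hkey
  have hr0 : (r : Polynomial ℚ) ≠ 0 := by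
    have : r ≠ 0 := by omega
    exact_mod_cast Nat.cast_ne_zero.mpr this
  apply mul_left_cancel₀ hr0
  rw [hkey]
  have hsplit : ∏ i ∈ Icc 1 r, ((r : Polynomial ℚ) * X + (i : Polynomial ℚ))
      = (∏ i ∈ Icc 1 (r - 1), ((r : Polynomial ℚ) * X + (i : Polynomial ℚ))) *
        ((r : Polynomial ℚ) * X + (r : Polynomial ℚ)) := by
    have : r = (r - 1) + 1 := by omega
    rw [this, Finset.prod_Icc_succ_top (by omega : 1 ≤ r - 1 + 1), ← this]
  rw [hsplit]
  ring
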